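/- The function g(x) = ((2x-1)/x²)·log(1-x) is strictly convex on (0,1/2). -/

import Mathlib

open Real Set Filter Topology

private lemma polypos {x : ℝ} (h0 : 0 < x) (h1 : x < 1/2) :
    0 < 6*x - 18*x^2 + 18*x^3 - 31*x^4 + 63*x^5 - 54*x^6 + 16*x^7 := by
  nlinarith [sq_nonneg (1 - 2*x), sq_nonneg x, mul_pos h0 h0, sq_nonneg (x*(1-2*x)),
    sq_nonneg (x^2*(1-2*x)), sq_nonneg (x^3*(1-2*x)), mul_pos (mul_pos h0 h0) h0,
    pow_pos h0 4, pow_pos h0 5, pow_pos h0 6, pow_pos h0 7]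

private lemma log_bound {x : ℝ} (h0 : 0 < x) (h1 : x < 1/2) :
    Real.log (1 - x) ≤ x^4/(1-x) - (x + x^2/2 + x^3/3) := by
  have habs : |x| < 1 := by rw [abs_of_pos h0]; linarith
  have := Real.abs_log_sub_add_sum_range_le habs 3
  have hsum : (∑ i ∈ Finset.range 3, x ^ (i + 1) / (i + 1)) = x + x^2/2 + x^3/3 := by
    simp [Finset.sum_range_succ]; ring
  rw [hsum, abs_of_pos h0] at this
  have := (abs_le.mp this).2
  linarith

private lemma hd1 {y : ℝ} (hy : y ≠ 0) (hy1 : (1:ℝ) - y ≠ 0) :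
    HasDerivAt (fun x : ℝ => ((2*x - 1) / x^2) * Real.log (1 - x))
      ((2*y - 2*y^2)/y^4 * Real.log (1-y) - (2*y-1)/(y^2*(1-y))) y := by
  have ha : HasDerivAt (fun t : ℝ => 2*t - 1) 2 y := by
    simpa using ((hasDerivAt_id y).const_mul 2).sub_const 1
  have hb : HasDerivAt (fun t : ℝ => t^2) (2*y) y := by
    simpa using hasDerivAt_pow 2 y
  have hc := ha.div hb (pow_ne_zero 2 hy)
  have hl : HasDerivAt (fun t : ℝ => Real.log (1 - t)) (-1/(1-y)) y := by
    have h1 : HasDerivAt (fun t : ℝ => 1 - t) (-1) y := by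
      simpa using (hasDerivAt_id y).const_sub 1
    simpa using h1.log hy1
  have : HasDerivAt (fun x : ℝ => ((2*x - 1) / x^2) * Real.log (1 - x)) _ y := hc.mul hl
  rw [Pi.div_apply] at this
  convert this using 1
  field_simp
  ring

private lemma hd2 {y : ℝ} (hy : y ≠ 0) (hy1 : (1:ℝ) - y ≠ 0) :
    HasDerivAt (fun t : ℝ => (2*t - 2*t^2)/t^4 * Real.log (1-t) - (2*t-1)/(t^2*(1-t)))
      ((4*y-6)/y^4 * Real.log (1-y) - 4/y^3 - (2*y-1)/(y^2*(1-y)^2)) y := by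
  have ha : HasDerivAt (fun t : ℝ => 2*t - 2*t^2) (2 - 4*y) y := by
    have : HasDerivAt (fun t : ℝ => 2*t - 2*t^2) _ y := ((hasDerivAt_id y).const_mul 2).sub ((hasDerivAt_pow 2 y).const_mul 2)
    convert this using 1 <;> ring
  have hb : HasDerivAt (fun t : ℝ => t^4) (4*y^3) y := by
    simpa using hasDerivAt_pow 4 y
  have hu := ha.div hb (pow_ne_zero 4 hy)
  have hl : HasDerivAt (fun t : ℝ => Real.log (1 - t)) (-1/(1-y)) y := by
    have h1 : HasDerivAt (fun t : ℝ => 1 - t) (-1) y := by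
      simpa using (hasDerivAt_id y).const_sub 1
    simpa using h1.log hy1
  have hc : HasDerivAt (fun t : ℝ => 2*t - 1) 2 y := by
    simpa using ((hasDerivAt_id y).const_mul 2).sub_const 1
  have hdneq : y^2*(1-y) ≠ 0 := mul_ne_zero (pow_ne_zero 2 hy) hy1
  have hd : HasDerivAt (fun t : ℝ => t^2*(1-t)) (2*y*(1-y) + y^2*(-1)) y := by
    have h2 : HasDerivAt (fun t : ℝ => t^2) (2*y) y := by simpa using hasDerivAt_pow 2 y
    have h3 : HasDerivAt (fun t : ℝ => 1 - t) (-1) y := by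
      simpa using (hasDerivAt_id y).const_sub 1
    exact h2.mul h3
  have hv := hc.div hd hdneq
  have : HasDerivAt (fun t : ℝ => (2*t - 2*t^2)/t^4 * Real.log (1-t) - (2*t-1)/(t^2*(1-t))) _ y := (hu.mul hl).sub hv
  rw [Pi.div_apply] at this
  convert this using 1
  field_simp
  ring

theorem stmt11 (x : ℝ) (hx : x ∈ Set.Ioo (0:ℝ) (1/2)) :
    0 < deriv (deriv (fun x : ℝ => ((2*x - 1) / x^2) * Real.log (1 - x))) x := by
  obtain ⟨h0, h1⟩ := hx
  have hx0 : x ≠ 0 := ne_of_gt h0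
  have h1x : (0:ℝ) < 1 - x := by linarith
  have hx1 : (1:ℝ) - x ≠ 0 := ne_of_gt h1x
  have heq : deriv (fun x : ℝ => ((2*x - 1) / x^2) * Real.log (1 - x))
      =ᶠ[𝓝 x] (fun t : ℝ => (2*t - 2*t^2)/t^4 * Real.log (1-t) - (2*t-1)/(t^2*(1-t))) := by
    filter_upwards [Ioo_mem_nhds h0 h1] with y hy
    exact (hd1 (ne_of_gt hy.1) (by linarith [hy.2] : (1:ℝ) - y ≠ 0)).deriv
  rw [heq.deriv_eq, (hd2 hx0 hx1).deriv]
  have hL := log_bound h0 h1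
  -- rewrite as a single fraction
  have key : (4*x-6)/x^4 * Real.log (1-x) - 4/x^3 - (2*x-1)/(x^2*(1-x)^2)
      = ((4*x-6)*(1-x)^2 * Real.log (1-x) - 4*x*(1-x)^2 - (2*x-1)*x^2) / (x^4*(1-x)^2) := by
    field_simp
  rw [key]
  apply div_pos _ (by positivity)
  have hL' : (1-x) * Real.log (1-x) ≤ x^4 - (1-x)*(x + x^2/2 + x^3/3) := by
    have := mul_le_mul_of_nonneg_left hL (le_of_lt h1x)
    calc (1-x) * Real.log (1-x) ≤ (1-x) * (x^4/(1-x) - (x + x^2/2 + x^3/3)) := this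
      _ = x^4 - (1-x)*(x + x^2/2 + x^3/3) := by field_simp
  have hmul : (4*x-6)*(1-x) < 0 := by nlinarith
  have h2 : (4*x-6)*(1-x) * ((1-x) * Real.log (1-x)) ≥
      (4*x-6)*(1-x) * (x^4 - (1-x)*(x + x^2/2 + x^3/3)) :=
    mul_le_mul_of_nonpos_left hL' (le_of_lt hmul)
  have hpoly := polypos h0 h1
  nlinarith [h2, hpoly]
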